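/- If A and B are subsets of an Abelian group G with A k-stable and B l-stable, then A ∪ B is r(k+1, l+1)+1-stable, where r denotes the two-colour Ramsey number. -/
import Mathlib


/-- `A ⊆ G` has the `k`-order property if there are `a, b ∈ G^k`
with `a i + b j ∈ A` iff `i ≤ j`. -/
def HasOrderProperty {G : Type*} [AddCommGroup G] (A : Set G) (k : ℕ) : Prop :=
  ∃ a b : Fin k → G, ∀ i j : Fin k, (a i + b j ∈ A ↔ i ≤ j)

/-- `N` is Ramsey for the pair `(s, t)`: every 2-colouring of the edges of the
complete graph on `N` vertices contains either a complete graph on `s` vertices in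
colour `true` or on `t` vertices in colour `false`. -/
def IsRamseyPair (s t N : ℕ) : Prop :=
  ∀ c : Fin N → Fin N → Bool,
    (∃ f : Fin s → Fin N, StrictMono f ∧ ∀ i j : Fin s, i < j → c (f i) (f j) = true) ∨
    (∃ f : Fin t → Fin N, StrictMono f ∧ ∀ i j : Fin t, i < j → c (f i) (f j) = false)

/-- The two-colour Ramsey number `r(s, t)`. -/
noncomputable def ramseyNumber (s t : ℕ) : ℕ := sInf {N | IsRamseyPair s t N}

lemma isRamseyPair_zero_left (t N : ℕ) : IsRamseyPair 0 t N := fun _ =>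
  Or.inl ⟨Fin.elim0, fun i => i.elim0, fun i => i.elim0⟩

lemma isRamseyPair_zero_right (s N : ℕ) : IsRamseyPair s 0 N := fun _ =>
  Or.inr ⟨Fin.elim0, fun i => i.elim0, fun i => i.elim0⟩

lemma isRamseyPair_succ_succ {s t N₁ N₂ : ℕ}
    (h1 : IsRamseyPair s (t + 1) N₁) (h2 : IsRamseyPair (s + 1) t N₂) :
    IsRamseyPair (s + 1) (t + 1) (N₁ + N₂ + 1) := by
  classical
  intro c
  have hM : N₁ + N₂ + 1 = N₁ + N₂ + 1 := rfl
  let T : Finset (Fin (N₁ + N₂ + 1)) := Finset.univ.filter (fun j => 0 < j ∧ c 0 j = true)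
  let F : Finset (Fin (N₁ + N₂ + 1)) := Finset.univ.filter (fun j => 0 < j ∧ c 0 j = false)
  have hcard : N₁ + N₂ ≤ T.card + F.card := by
    have hsub : (Finset.univ.filter (fun j : Fin (N₁ + N₂ + 1) => 0 < j)) ⊆ T ∪ F := by
      intro j hj
      simp only [Finset.mem_filter, Finset.mem_univ, true_and] at hj
      rcases Bool.eq_false_or_eq_true (c 0 j) with h | h
      · exact Finset.mem_union_left _
          (Finset.mem_filter.mpr ⟨Finset.mem_univ _, hj, h⟩)
      · exact Finset.mem_union_right _
          (Finset.mem_filter.mpr ⟨Finset.mem_univ _, hj, h⟩)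
    have h1' : (Finset.univ.filter (fun j : Fin (N₁ + N₂ + 1) => 0 < j)).card = N₁ + N₂ := by
      have : (Finset.univ.filter (fun j : Fin (N₁ + N₂ + 1) => 0 < j)) = Finset.univ \ {0} := by
        ext j; simp [Fin.pos_iff_ne_zero]
      rw [this, Finset.card_sdiff_of_subset (by simp)]
      simp
    calc N₁ + N₂ = (Finset.univ.filter (fun j : Fin (N₁ + N₂ + 1) => 0 < j)).card := h1'.symm
      _ ≤ (T ∪ F).card := Finset.card_le_card hsub
      _ ≤ T.card + F.card := Finset.card_union_le T F
  have hTF : N₁ ≤ T.card ∨ N₂ ≤ F.card := by omega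
  rcases hTF with hT | hF
  · -- many true neighbours of 0
    obtain ⟨T', hT'sub, hT'card⟩ := T.exists_subset_card_eq hT
    let e := T'.orderEmbOfFin hT'card
    have he_mem : ∀ i, e i ∈ T := fun i => hT'sub (T'.orderEmbOfFin_mem hT'card i)
    have he_pos : ∀ i, 0 < e i := fun i => by
      have := he_mem i; simp only [T, Finset.mem_filter] at this; exact this.2.1
    have he_col : ∀ i, c 0 (e i) = true := fun i => by
      have := he_mem i; simp only [T, Finset.mem_filter] at this; exact this.2.2
    rcases h1 (fun i j => c (e i) (e j)) with ⟨g, hg, hgc⟩ | ⟨g, hg, hgc⟩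
    · -- true clique of size s among neighbours; add vertex 0
      refine Or.inl ⟨Fin.cases 0 (fun i => e (g i)), ?_, ?_⟩
      · intro i j hij
        induction j using Fin.cases with
        | zero => exact absurd hij (by simp)
        | succ j =>
          induction i using Fin.cases with
          | zero => simpa using he_pos (g j)
          | succ i =>
            simp only [Fin.cases_succ]
            exact e.strictMono (hg (by exact_mod_cast Fin.succ_lt_succ_iff.mp hij))
      · intro i j hij
        induction j using Fin.cases with
        | zero => exact absurd hij (by simp)
        | succ j =>
          induction i using Fin.cases with
          | zero => simpa using he_col (g j)
          | succ i =>
            simp only [Fin.cases_succ]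
            exact hgc i j (by exact_mod_cast Fin.succ_lt_succ_iff.mp hij)
    · exact Or.inr ⟨fun i => e (g i), e.strictMono.comp hg, fun i j hij => hgc i j hij⟩
  · -- many false neighbours of 0
    obtain ⟨F', hF'sub, hF'card⟩ := F.exists_subset_card_eq hF
    let e := F'.orderEmbOfFin hF'card
    have he_mem : ∀ i, e i ∈ F := fun i => hF'sub (F'.orderEmbOfFin_mem hF'card i)
    have he_pos : ∀ i, 0 < e i := fun i => by
      have := he_mem i; simp only [F, Finset.mem_filter] at this; exact this.2.1
    have he_col : ∀ i, c 0 (e i) = false := fun i => by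
      have := he_mem i; simp only [F, Finset.mem_filter] at this; exact this.2.2
    rcases h2 (fun i j => c (e i) (e j)) with ⟨g, hg, hgc⟩ | ⟨g, hg, hgc⟩
    · exact Or.inl ⟨fun i => e (g i), e.strictMono.comp hg, fun i j hij => hgc i j hij⟩
    · refine Or.inr ⟨Fin.cases 0 (fun i => e (g i)), ?_, ?_⟩
      · intro i j hij
        induction j using Fin.cases with
        | zero => exact absurd hij (by simp)
        | succ j =>
          induction i using Fin.cases with
          | zero => simpa using he_pos (g j)
          | succ i =>
            simp only [Fin.cases_succ]
            exact e.strictMono (hg (by exact_mod_cast Fin.succ_lt_succ_iff.mp hij))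
      · intro i j hij
        induction j using Fin.cases with
        | zero => exact absurd hij (by simp)
        | succ j =>
          induction i using Fin.cases with
          | zero => simpa using he_col (g j)
          | succ i =>
            simp only [Fin.cases_succ]
            exact hgc i j (by exact_mod_cast Fin.succ_lt_succ_iff.mp hij)

lemma exists_isRamseyPair (s t : ℕ) : ∃ N, IsRamseyPair s t N := by
  induction s generalizing t with
  | zero => exact ⟨0, isRamseyPair_zero_left t 0⟩
  | succ s ih =>
    induction t with
    | zero => exact ⟨0, isRamseyPair_zero_right (s + 1) 0⟩
    | succ t iht =>
      obtain ⟨N₁, h1⟩ := ih (t + 1)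
      obtain ⟨N₂, h2⟩ := iht
      exact ⟨N₁ + N₂ + 1, isRamseyPair_succ_succ h1 h2⟩

lemma isRamseyPair_ramseyNumber (s t : ℕ) : IsRamseyPair s t (ramseyNumber s t) := by
  have hne : {N | IsRamseyPair s t N}.Nonempty := exists_isRamseyPair s t
  exact Nat.sInf_mem hne

theorem union_stable {G : Type*} [AddCommGroup G] (A B : Set G) (k l : ℕ)
    (hA : ¬ HasOrderProperty A k) (hB : ¬ HasOrderProperty B l) :
    ¬ HasOrderProperty (A ∪ B) (ramseyNumber (k + 1) (l + 1) + 1) := by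
  classical
  set R := ramseyNumber (k + 1) (l + 1) with hR
  rintro ⟨a, b, hab⟩
  have hRam := isRamseyPair_ramseyNumber (k + 1) (l + 1)
  rcases hRam (fun i j => decide (a i.succ + b j.castSucc ∈ A)) with
    ⟨f, hf, hfc⟩ | ⟨f, hf, hfc⟩
  · -- true clique: A has the k-order property
    have key : ∀ i j : Fin (k + 1), a (f i).succ + b (f j).castSucc ∈ A ↔ i < j := by
      intro i j
      constructor
      · intro hmem
        by_contra hij
        have hle : f j ≤ f i := hf.monotone (le_of_not_gt hij)
        have : ¬ ((f i).succ ≤ (f j).castSucc) := by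
          simp only [Fin.le_def, Fin.val_succ, Fin.coe_castSucc]
          omega
        exact this ((hab _ _).mp (Or.inl hmem))
      · intro hij
        have := hfc i j hij
        exact of_decide_eq_true this
    refine hA ⟨fun i => a (f i.castSucc).succ, fun j => b (f j.succ).castSucc, ?_⟩
    intro i j
    rw [key]
    exact Fin.castSucc_lt_succ_iff
  · -- false clique: B has the l-order property
    have key : ∀ i j : Fin (l + 1), a (f i).succ + b (f j).castSucc ∈ B ↔ i < j := by
      intro i j
      constructor
      · intro hmem
        by_contra hij
        have hle : f j ≤ f i := hf.monotone (le_of_not_gt hij)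
        have : ¬ ((f i).succ ≤ (f j).castSucc) := by
          simp only [Fin.le_def, Fin.val_succ, Fin.coe_castSucc]
          omega
        exact this ((hab _ _).mp (Or.inr hmem))
      · intro hij
        have hlt : f i < f j := hf hij
        have hle : (f i).succ ≤ (f j).castSucc := by
          simp only [Fin.le_def, Fin.val_succ, Fin.coe_castSucc]
          exact hlt
        have hmem : a (f i).succ + b (f j).castSucc ∈ A ∪ B := (hab _ _).mpr hle
        have hnA : a (f i).succ + b (f j).castSucc ∉ A :=
          of_decide_eq_false (hfc i j hij)
        exact hmem.resolve_left hnA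
    refine hB ⟨fun i => a (f i.castSucc).succ, fun j => b (f j.succ).castSucc, ?_⟩
    intro i j
    rw [key]
    exact Fin.castSucc_lt_succ_iff
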